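/- Let m be a positive integer and let a, b be integers. The congruence a·x ≡ b (mod m) has a solution x with gcd(x,m) = 1 if and only if gcd(a,m) = gcd(b,m). -/

import Mathlib

/-- Congruent integers have the same gcd with the modulus. -/
lemma modeq_gcd_eq {n a b : ℤ} (h : a ≡ b [ZMOD n]) : Int.gcd a n = Int.gcd b n := by
  have h1 : (Int.gcd a n : ℤ) ∣ b := by
    have : (Int.gcd a n : ℤ) ∣ b - a := dvd_trans (Int.gcd_dvd_right _ _) h.dvd
    simpa using dvd_add this (Int.gcd_dvd_left _ _)
  have h2 : (Int.gcd b n : ℤ) ∣ a := by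
    have : (Int.gcd b n : ℤ) ∣ a - b := dvd_trans (Int.gcd_dvd_right _ _) h.symm.dvd
    simpa using dvd_add this (Int.gcd_dvd_left _ _)
  exact Nat.dvd_antisymm
    (Int.dvd_gcd h1 (Int.gcd_dvd_right _ _))
    (Int.dvd_gcd h2 (Int.gcd_dvd_right _ _))

/-- A residue coprime to `n` can be shifted by a multiple of `n` to become coprime to `m`. -/
lemma exists_add_mul_coprime (m : ℕ) (hm : m ≠ 0) (x n : ℕ) (hx : x.Coprime n) :
    ∃ k : ℕ, (x + k * n).Coprime m := by
  let ps := m.primeFactors.filter (fun p ↦ ¬p ∣ x)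
  use ps.prod id
  apply Nat.coprime_of_dvd
  intro p pp hp hpn
  by_cases hpx : p ∣ x
  · have h := Nat.dvd_sub hp hpx
    rw [add_comm, Nat.add_sub_cancel] at h
    rcases pp.dvd_mul.mp h with h | h
    · have ⟨q, hq, hq'⟩ := (pp.prime.dvd_finset_prod_iff id).mp h
      rw [Finset.mem_filter, Nat.mem_primeFactors,
        ← (Nat.prime_dvd_prime_iff_eq pp hq.1.1).mp hq'] at hq
      exact hq.2 hpx
    · exact Nat.Prime.not_coprime_iff_dvd.mpr ⟨p, pp, hpx, h⟩ hx
  · have pps : p ∈ ps := Finset.mem_filter.mpr ⟨Nat.mem_primeFactors.mpr ⟨pp, hpn, hm⟩, hpx⟩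
    have h := Nat.dvd_sub hp (Dvd.dvd.mul_right (Finset.dvd_prod_of_mem id pps) n)
    rw [Nat.add_sub_cancel] at h
    exact hpx h

/-- Every integer is congruent mod `m` to `gcd(a,m)` times a unit. -/
lemma exists_unit_rep (m : ℕ) (hm : 0 < m) (a : ℤ) :
    ∃ u : ℤ, Int.gcd u m = 1 ∧ a ≡ (Int.gcd a m : ℤ) * u [ZMOD (m : ℤ)] := by
  set d : ℕ := Int.gcd a m with hd
  have hd0 : 0 < d := Int.gcd_pos_of_ne_zero_right a (by exact_mod_cast hm.ne')
  have hdm : d ∣ m := Int.natCast_dvd_natCast.mp (Int.gcd_dvd_right _ _)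
  obtain ⟨m', hm'⟩ := hdm
  have hm'0 : 0 < m' := Nat.pos_of_ne_zero (fun h => by rw [h, Nat.mul_zero] at hm'; omega)
  have hda : (d : ℤ) ∣ a := Int.gcd_dvd_left _ _
  obtain ⟨a', ha'⟩ := hda
  -- gcd a' m' = 1
  have hgcd1 : Int.gcd a' (m' : ℤ) = 1 := by
    have h1 : Int.gcd ((d : ℤ) * a') ((d : ℤ) * m') = d * Int.gcd a' m' := by
      rw [Int.gcd_mul_left]; simp
    have h2 : Int.gcd ((d : ℤ) * a') ((d : ℤ) * m') = d := by
      rw [← ha']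
      have : ((d : ℤ) * m') = (m : ℤ) := by exact_mod_cast hm'.symm
      rw [this, ← hd]
    rw [h1] at h2
    exact Nat.eq_of_mul_eq_mul_left hd0 (by rw [Nat.mul_one]; exact h2)
  set x : ℕ := (a' % m').toNat with hx
  have hxc : (x : ℤ) = a' % m' :=
    Int.toNat_of_nonneg (Int.emod_nonneg _ (by exact_mod_cast hm'0.ne'))
  have hxa' : (x : ℤ) ≡ a' [ZMOD (m' : ℤ)] := by
    rw [hxc]; exact Int.emod_emod_of_dvd _ dvd_rfl
  have hxcop : Nat.Coprime x m' := by
    have := modeq_gcd_eq hxa'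
    rw [hgcd1] at this
    simpa [Int.gcd_natCast_natCast] using this
  obtain ⟨k, hk⟩ := exists_add_mul_coprime m hm.ne' x m' hxcop
  refine ⟨((x + k * m' : ℕ) : ℤ), by rw [Int.gcd_natCast_natCast]; exact hk, ?_⟩
  have h1 : a' ≡ ((x + k * m' : ℕ) : ℤ) [ZMOD (m' : ℤ)] := by
    refine hxa'.symm.trans ?_
    push_cast
    exact (Int.modEq_iff_dvd.mpr ⟨k, by ring⟩)
  have h2 := h1.mul_left' (c := (d : ℤ))
  have hmm : (d : ℤ) * (m' : ℤ) = (m : ℤ) := by exact_mod_cast hm'.symm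
  rw [hmm, ← ha'] at h2
  exact h2

/-- The congruence `a·x ≡ b (mod m)` has a solution `x` coprime to `m`
if and only if `gcd(a, m) = gcd(b, m)`. -/
theorem stmt3 (m : ℕ) (hm : 0 < m) (a b : ℤ) :
    (∃ x : ℤ, Int.gcd x m = 1 ∧ a * x ≡ b [ZMOD (m : ℤ)]) ↔ Int.gcd a m = Int.gcd b m := by
  constructor
  · rintro ⟨x, hx, hc⟩
    have h1 : Int.gcd (a * x) m = Int.gcd a m := by
      unfold Int.gcd
      rw [Int.natAbs_mul]
      exact Nat.Coprime.gcd_mul_right_cancel _ hx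
    rw [← h1]
    exact modeq_gcd_eq hc
  · intro hgcd
    obtain ⟨u, hu, ha⟩ := exists_unit_rep m hm a
    obtain ⟨v, hv, hb⟩ := exists_unit_rep m hm b
    rw [← hgcd] at hb
    set d : ℤ := (Int.gcd a m : ℤ)
    obtain ⟨s, t, hst⟩ := Int.isCoprime_iff_gcd_eq_one.mpr hu
    refine ⟨s * v, ?_, ?_⟩
    · have hs : IsCoprime s (m : ℤ) := ⟨u, t, by linarith [hst]⟩
      have hv' : IsCoprime v (m : ℤ) := Int.isCoprime_iff_gcd_eq_one.mpr hv
      exact Int.isCoprime_iff_gcd_eq_one.mp (IsCoprime.mul_left hs hv')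
    · have h1 : a * (s * v) ≡ d * u * (s * v) [ZMOD (m : ℤ)] := ha.mul_right _
      have h2 : d * u * (s * v) ≡ d * v [ZMOD (m : ℤ)] :=
        Int.modEq_iff_dvd.mpr ⟨d * v * t, by linear_combination (-(d * v)) * hst⟩
      exact h1.trans (h2.trans hb.symm)
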